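/- For every integer k ≥ 3, there exists a weighted poset P_π on {1,…,2^k} whose weight function π takes the value 2 on at least one element (so that P_π is not an ordinary poset) such that the extended binary Hamming code H̃_k is a 2-perfect P_π-code. -/

import Mathlib

open Classical

noncomputable def wtP {α : Type*} [Fintype α] (le : α → α → Prop) (π : α → ℕ)
    (x : α → ZMod 2) : ℕ :=
  ∑ j ∈ Finset.univ.filter (fun j => ∃ i, x i ≠ 0 ∧ le j i), π j

noncomputable def dP {α : Type*} [Fintype α] (le : α → α → Prop) (π : α → ℕ)
    (x y : α → ZMod 2) : ℕ :=
  wtP le π (x - y)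

def IsCovering {β : Type*} (d : β → β → ℕ) (C : Set β) (r : ℕ) : Prop :=
  ∀ x, ∃ c ∈ C, d c x ≤ r

def IsPacking {β : Type*} (d : β → β → ℕ) (C : Set β) (r : ℕ) : Prop :=
  ∀ c₁ ∈ C, ∀ c₂ ∈ C, c₁ ≠ c₂ → ∀ x, ¬(d c₁ x ≤ r ∧ d c₂ x ≤ r)

def extHamming (k : ℕ) : Set (Fin (2 ^ k) → ZMod 2) :=
  {x | (∑ i, x i) = 0 ∧
    ∀ j < k, (∑ i ∈ Finset.univ.filter (fun i : Fin (2 ^ k) => Nat.testBit i.val j), x i) = 0}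

namespace Stmt16

noncomputable section

variable {k : ℕ}

/-- standard basis vector -/
def e (t : Fin (2^k)) : Fin (2^k) → ZMod 2 := fun j => if j = t then 1 else 0

/-- the weighted-poset order: the element with value 1 lies below everything whose
value is not in {1,2,4,7}; otherwise only reflexivity. -/
def Le (j i : Fin (2^k)) : Prop :=
  j = i ∨ (j.val = 1 ∧ i.val ≠ 1 ∧ i.val ≠ 2 ∧ i.val ≠ 4 ∧ i.val ≠ 7)

/-- weights: 2 at value 7, else 1 -/
def pi' : Fin (2^k) → ℕ := fun i => if i.val = 7 then 2 else 1

def sig0 (x : Fin (2^k) → ZMod 2) : ZMod 2 := ∑ i, x i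

def sig (j : ℕ) (x : Fin (2^k) → ZMod 2) : ZMod 2 :=
  ∑ i ∈ Finset.univ.filter (fun i : Fin (2^k) => Nat.testBit i.val j), x i

lemma sum_e (A : Finset (Fin (2^k))) (t : Fin (2^k)) :
    ∑ i ∈ A, e t i = (if t ∈ A then (1 : ZMod 2) else 0) := by
  simp [e]

lemma sig0_e (t : Fin (2^k)) : sig0 (e t) = 1 := by
  rw [sig0, sum_e]; simp

lemma sig_e (j : ℕ) (t : Fin (2^k)) :
    sig j (e t) = if Nat.testBit t.val j then 1 else 0 := by
  rw [sig, sum_e]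
  simp [Finset.mem_filter]

lemma sig0_add (x y : Fin (2^k) → ZMod 2) : sig0 (x + y) = sig0 x + sig0 y := by
  simp [sig0, Finset.sum_add_distrib]

lemma sig_add (j : ℕ) (x y : Fin (2^k) → ZMod 2) : sig j (x + y) = sig j x + sig j y := by
  simp [sig, Finset.sum_add_distrib]

lemma sig0_sub (x y : Fin (2^k) → ZMod 2) : sig0 (x - y) = sig0 x - sig0 y := by
  simp [sig0, Finset.sum_sub_distrib]

lemma sig_sub (j : ℕ) (x y : Fin (2^k) → ZMod 2) : sig j (x - y) = sig j x - sig j y := by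
  simp [sig, Finset.sum_sub_distrib]

lemma ind_add (a b : Bool) :
    (if a = true then (1 : ZMod 2) else 0) + (if b = true then (1:ZMod 2) else 0) =
      if (a ^^ b) = true then (1:ZMod 2) else 0 := by
  cases a <;> cases b <;> decide

lemma sig_pair (j : ℕ) (t s : Fin (2^k)) :
    sig j (e t + e s) = if Nat.testBit (t.val ^^^ s.val) j then 1 else 0 := by
  rw [sig_add, sig_e, sig_e, Nat.testBit_xor]
  exact ind_add _ _

lemma sig0_pair (t s : Fin (2^k)) : sig0 (e t + e s) = 0 := by
  rw [sig0_add, sig0_e, sig0_e]; decide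

lemma ind_inj {a b : Bool}
    (h : (if a = true then (1 : ZMod 2) else 0) = (if b = true then (1:ZMod 2) else 0)) :
    a = b := by
  cases a <;> cases b <;> first | rfl | exact absurd h (by decide)

lemma bits_inj {u u' : ℕ} (hu : u < 2^k) (hu' : u' < 2^k)
    (h : ∀ j < k, u.testBit j = u'.testBit j) : u = u' := by
  apply Nat.eq_of_testBit_eq
  intro j
  by_cases hj : j < k
  · exact h j hj
  · have hk2 : (2:ℕ)^k ≤ 2^j := Nat.pow_le_pow_right (by norm_num) (le_of_not_gt hj)
    rw [Nat.testBit_lt_two_pow (lt_of_lt_of_le hu hk2),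
      Nat.testBit_lt_two_pow (lt_of_lt_of_le hu' hk2)]

/-- The down-set of the support of `x`. -/
def Fset (x : Fin (2^k) → ZMod 2) : Finset (Fin (2^k)) :=
  Finset.univ.filter (fun j => ∃ i, x i ≠ 0 ∧ Le j i)

lemma wtP_eq (x : Fin (2^k) → ZMod 2) : wtP Le pi' x = ∑ j ∈ Fset x, pi' j := by
  unfold wtP Fset; congr 1; ext; simp

lemma mem_Fset {x : Fin (2^k) → ZMod 2} {j : Fin (2^k)} :
    j ∈ Fset x ↔ (x j ≠ 0 ∨ (j.val = 1 ∧
      ∃ i, x i ≠ 0 ∧ i.val ≠ 1 ∧ i.val ≠ 2 ∧ i.val ≠ 4 ∧ i.val ≠ 7)) := by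
  rw [Fset, Finset.mem_filter]
  simp only [Fset, Finset.mem_filter, Finset.mem_univ, true_and, Le]
  constructor
  · rintro ⟨i, hi, (rfl | ⟨h1, h⟩)⟩
    · exact Or.inl hi
    · exact Or.inr ⟨h1, i, hi, h⟩
  · rintro (h | ⟨h1, i, hi, h⟩)
    · exact ⟨j, h, Or.inl rfl⟩
    · exact ⟨i, hi, Or.inr ⟨h1, h⟩⟩

lemma one_le_pi' (i : Fin (2^k)) : 1 ≤ pi' i := by
  unfold pi'; split <;> omega

lemma card_le_wtP (x : Fin (2^k) → ZMod 2) : (Fset x).card ≤ wtP Le pi' x := by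
  rw [wtP_eq, Finset.card_eq_sum_ones]
  exact Finset.sum_le_sum (fun i _ => one_le_pi' i)

lemma wtP_le_of_subset {x : Fin (2^k) → ZMod 2} {T : Finset (Fin (2^k))}
    (h : Fset x ⊆ T) : wtP Le pi' x ≤ ∑ j ∈ T, pi' j := by
  rw [wtP_eq]
  exact Finset.sum_le_sum_of_subset h

lemma sum_pair_le (t s : Fin (2^k)) (f : Fin (2^k) → ℕ) :
    ∑ j ∈ ({t, s} : Finset (Fin (2^k))), f j ≤ f t + f s := by
  by_cases h : t = s
  · subst h; simp
  · rw [Finset.sum_pair h]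

/-- the decoder for even syndromes -/
def decE (h8 : 8 ≤ 2^k) (u : ℕ) (hu : u < 2^k) : Fin (2^k) → ZMod 2 :=
  if u = 0 then 0
  else if u = 6 then e ⟨2, by omega⟩ + e ⟨4, by omega⟩
  else e ⟨1, by omega⟩ + e ⟨1 ^^^ u, Nat.xor_lt_two_pow (by omega) hu⟩

lemma sig_decE (h8 : 8 ≤ 2^k) (u : ℕ) (hu : u < 2^k) (j : ℕ) :
    sig j (decE h8 u hu) = if Nat.testBit u j then 1 else 0 := by
  by_cases h1 : u = 0
  · subst h1
    unfold decE
    rw [if_pos rfl]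
    simp [sig, Nat.zero_testBit]
  · by_cases h2 : u = 6
    · subst h2
      unfold decE
      rw [if_neg h1, if_pos rfl, sig_pair]
      show (if Nat.testBit (2 ^^^ 4) j = true then (1:ZMod 2) else 0) =
        if Nat.testBit 6 j = true then 1 else 0
      rw [show (2:ℕ) ^^^ 4 = 6 from by decide]
    · unfold decE
      rw [if_neg h1, if_neg h2, sig_pair]
      simp only [xor_cancel_left]

lemma sig0_decE (h8 : 8 ≤ 2^k) (u : ℕ) (hu : u < 2^k) : sig0 (decE h8 u hu) = 0 := by
  unfold decE
  split_ifs
  · simp [sig0]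
  · exact sig0_pair _ _
  · exact sig0_pair _ _

lemma wtP_decE (h8 : 8 ≤ 2^k) (u : ℕ) (hu : u < 2^k) : wtP Le pi' (decE h8 u hu) ≤ 2 := by
  unfold decE
  split_ifs with h1 h2
  · have : Fset (k := k) 0 = ∅ := by
      ext j; simp [mem_Fset]
    rw [wtP_eq, this]; simp
  · -- pair {2,4}
    set t : Fin (2^k) := ⟨2, by omega⟩
    set s : Fin (2^k) := ⟨4, by omega⟩
    have hsub : Fset (e t + e s) ⊆ {t, s} := by
      intro j hj
      rw [mem_Fset] at hj
      have hsupp : ∀ m : Fin (2^k), (e t + e s) m ≠ 0 → m = t ∨ m = s := by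
        intro m hm
        by_contra hc
        push_neg at hc
        simp [e, Pi.add_apply, if_neg hc.1, if_neg hc.2] at hm
      rcases hj with h | ⟨_, i, hi, hibad⟩
      · simpa [Finset.mem_insert, Finset.mem_singleton] using hsupp j h
      · rcases hsupp i hi with rfl | rfl
        · exact absurd rfl hibad.2.1
        · exact absurd rfl hibad.2.2.1
    calc wtP Le pi' (e t + e s) ≤ ∑ j ∈ ({t, s} : Finset _), pi' j := wtP_le_of_subset hsub
      _ ≤ pi' t + pi' s := sum_pair_le t s pi'
      _ ≤ 2 := by simp [pi', t, s]
  · -- pair {1, 1^^^u}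
    set t : Fin (2^k) := ⟨1, by omega⟩
    set s : Fin (2^k) := ⟨1 ^^^ u, Nat.xor_lt_two_pow (by omega) hu⟩
    have hs7 : s.val ≠ 7 := by
      intro h
      have h' : (1:ℕ) ^^^ u = 7 := h
      have h6 : u = 6 := by
        have := congrArg (fun z => 1 ^^^ z) h'
        simpa [xor_cancel_left, show (1:ℕ) ^^^ 7 = 6 from by decide] using this
      exact h2 h6
    have hsub : Fset (e t + e s) ⊆ {t, s} := by
      intro j hj
      rw [mem_Fset] at hj
      have hsupp : ∀ m : Fin (2^k), (e t + e s) m ≠ 0 → m = t ∨ m = s := by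
        intro m hm
        by_contra hc
        push_neg at hc
        simp [e, Pi.add_apply, if_neg hc.1, if_neg hc.2] at hm
      rcases hj with h | ⟨hj1, _⟩
      · simpa [Finset.mem_insert, Finset.mem_singleton] using hsupp j h
      · simp only [Finset.mem_insert, Finset.mem_singleton]
        exact Or.inl (Fin.ext hj1)
    calc wtP Le pi' (e t + e s) ≤ ∑ j ∈ ({t, s} : Finset _), pi' j := wtP_le_of_subset hsub
      _ ≤ pi' t + pi' s := sum_pair_le t s pi'
      _ ≤ 2 := by
          have : pi' t = 1 := by simp [pi', t]
          have hs : pi' s = 1 := by simp [pi', hs7]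
          omega

lemma wtP_e (h8 : 8 ≤ 2^k) (t : Fin (2^k)) : wtP Le pi' (e t) ≤ 2 := by
  have hsupp : ∀ m : Fin (2^k), e t m ≠ 0 → m = t := by
    intro m hm
    by_contra hc
    simp [e, if_neg hc] at hm
  by_cases h7 : t.val = 7
  · have hsub : Fset (e t) ⊆ {t} := by
      intro j hj
      rw [mem_Fset] at hj
      rcases hj with h | ⟨_, i, hi, hibad⟩
      · simp [hsupp j h]
      · have := hsupp i hi
        subst this
        exact absurd h7 hibad.2.2.2
    calc wtP Le pi' (e t) ≤ ∑ j ∈ ({t} : Finset _), pi' j := wtP_le_of_subset hsub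
      _ = pi' t := by simp
      _ ≤ 2 := by simp [pi']; split <;> omega
  · set b : Fin (2^k) := ⟨1, by omega⟩
    have hsub : Fset (e t) ⊆ {t, b} := by
      intro j hj
      rw [mem_Fset] at hj
      rcases hj with h | ⟨hj1, _⟩
      · simp [hsupp j h]
      · simp only [Finset.mem_insert, Finset.mem_singleton]
        exact Or.inr (Fin.ext hj1)
    calc wtP Le pi' (e t) ≤ ∑ j ∈ ({t, b} : Finset _), pi' j := wtP_le_of_subset hsub
      _ ≤ pi' t + pi' b := sum_pair_le t b pi'
      _ ≤ 2 := by
          have : pi' t = 1 := by simp [pi', h7]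
          have hb : pi' b = 1 := by simp [pi', b]
          omega

lemma pair_form (h8 : 8 ≤ 2^k) (b s : Fin (2^k)) (hb : b.val = 1)
    (hs1 : s.val ≠ 1) (hs7 : s.val ≠ 7) :
    e b + e s = decE h8 (1 ^^^ s.val) (Nat.xor_lt_two_pow (by omega) s.isLt) := by
  have hu0 : 1 ^^^ s.val ≠ 0 := by
    intro h
    exact hs1 (xor_eq_zero_iff.mp h).symm
  have hu6 : 1 ^^^ s.val ≠ 6 := by
    intro h
    have := congrArg (fun z => 1 ^^^ z) h
    simp only [xor_cancel_left, show (1:ℕ) ^^^ 6 = 7 from by decide] at this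
    exact hs7 this
  unfold decE
  rw [if_neg hu0, if_neg hu6]
  congr 1
  · exact congrArg e (Fin.ext hb)
  · exact congrArg e (Fin.ext (by simp only [xor_cancel_left]))

lemma pair_form_cd (h8 : 8 ≤ 2^k) (c d : Fin (2^k)) (hc : c.val = 2) (hd : d.val = 4) :
    e c + e d = decE h8 6 (by omega) := by
  unfold decE
  rw [if_neg (by omega), if_pos rfl]
  congr 1
  · exact congrArg e (Fin.ext hc)
  · exact congrArg e (Fin.ext hd)

lemma classify (h8 : 8 ≤ 2^k) (x : Fin (2^k) → ZMod 2) (hx : wtP Le pi' x ≤ 2) :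
    (∃ i, x = e i) ∨ (∃ u, ∃ hu : u < 2^k, x = decE h8 u hu) := by
  classical
  set supp : Finset (Fin (2^k)) := Finset.univ.filter (fun i => x i ≠ 0) with hsupp_def
  have hmem_supp : ∀ m : Fin (2^k), m ∈ supp ↔ x m ≠ 0 := by
    intro m; simp [hsupp_def]
  have hsuppF : supp ⊆ Fset x := by
    intro m hm
    rw [hmem_supp] at hm
    rw [mem_Fset]
    exact Or.inl hm
  have hone : ∀ a : ZMod 2, a ≠ 0 → a = 1 := by decide
  have hcard : supp.card ≤ 2 :=
    le_trans (Finset.card_le_card hsuppF) (le_trans (card_le_wtP x) hx)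
  have hc3 : supp.card = 0 ∨ supp.card = 1 ∨ supp.card = 2 := by omega
  rcases hc3 with hc | hc | hc
  · -- x = 0
    have hempty : supp = ∅ := Finset.card_eq_zero.mp hc
    have hx0 : x = 0 := by
      funext m
      by_contra hm
      have : m ∈ supp := (hmem_supp m).mpr hm
      rw [hempty] at this
      exact absurd this (Finset.notMem_empty m)
    refine Or.inr ⟨0, by omega, ?_⟩
    rw [hx0]
    unfold decE
    rw [if_pos rfl]
  · -- x = e i
    obtain ⟨i, hi⟩ := Finset.card_eq_one.mp hc
    left
    refine ⟨i, funext fun m => ?_⟩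
    by_cases hm : m = i
    · subst hm
      have : x m ≠ 0 := (hmem_supp m).mp (hi ▸ Finset.mem_singleton_self m)
      simp [e, hone _ this]
    · have : x m = 0 := by
        by_contra hne
        have := (hmem_supp m).mpr hne
        rw [hi, Finset.mem_singleton] at this
        exact hm this
      simp [e, if_neg hm, this]
  · -- two nonzero coordinates
    obtain ⟨i, j, hij, hs2⟩ := Finset.card_eq_two.mp hc
    have hvalij : i.val ≠ j.val := fun h => hij (Fin.ext h)
    have hxm : ∀ m : Fin (2^k), x m ≠ 0 ↔ (m = i ∨ m = j) := by
      intro m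
      rw [← hmem_supp, hs2]
      simp
    have hxi : x i = 1 := hone _ ((hxm i).mpr (Or.inl rfl))
    have hxj : x j = 1 := hone _ ((hxm j).mpr (Or.inr rfl))
    have hxe : x = e i + e j := by
      funext m
      by_cases hmi : m = i
      · subst hmi
        have hmj : m ≠ j := hij
        simp [e, Pi.add_apply, if_neg hmj, hxi]
      · by_cases hmj : m = j
        · subst hmj
          simp [e, Pi.add_apply, if_neg hmi, hxj]
        · have : x m = 0 := by
            by_contra hne
            rcases (hxm m).mp hne with h | h
            · exact hmi h
            · exact hmj h
          simp [e, Pi.add_apply, if_neg hmi, if_neg hmj, this]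
    -- weight bound: pi' i + pi' j ≤ 2
    have hlow : pi' i + pi' j ≤ 2 := by
      have h1 : ∑ m ∈ supp, pi' m ≤ wtP Le pi' x := by
        rw [wtP_eq]
        exact Finset.sum_le_sum_of_subset hsuppF
      rw [hs2, Finset.sum_pair hij] at h1
      omega
    have hpi : pi' i = 1 ∧ pi' j = 1 := by
      have := one_le_pi' i
      have := one_le_pi' j
      omega
    have hi7 : i.val ≠ 7 := by
      intro h
      have : pi' i = 2 := by simp [pi', h]
      omega
    have hj7 : j.val ≠ 7 := by
      intro h
      have : pi' j = 2 := by simp [pi', h]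
      omega
    right
    by_cases hbad : (i.val = 1 ∨ i.val = 2 ∨ i.val = 4) ∧ (j.val = 1 ∨ j.val = 2 ∨ j.val = 4)
    · obtain ⟨hiv, hjv⟩ := hbad
      rcases hiv with h1 | h1 | h1 <;> rcases hjv with h2 | h2 | h2
      · omega
      · exact ⟨1 ^^^ j.val, Nat.xor_lt_two_pow (by omega) j.isLt, by rw [hxe]; exact pair_form h8 i j h1 (by omega) hj7⟩
      · exact ⟨1 ^^^ j.val, Nat.xor_lt_two_pow (by omega) j.isLt, by rw [hxe]; exact pair_form h8 i j h1 (by omega) hj7⟩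
      · exact ⟨1 ^^^ i.val, Nat.xor_lt_two_pow (by omega) i.isLt, by
          rw [hxe, add_comm]; exact pair_form h8 j i h2 (by omega) hi7⟩
      · omega
      · exact ⟨6, by omega, by rw [hxe]; exact pair_form_cd h8 i j h1 h2⟩
      · exact ⟨1 ^^^ i.val, Nat.xor_lt_two_pow (by omega) i.isLt, by
          rw [hxe, add_comm]; exact pair_form h8 j i h2 (by omega) hi7⟩
      · exact ⟨6, by omega, by rw [hxe, add_comm]; exact pair_form_cd h8 j i h2 h1⟩
      · omega
    · -- some coordinate has value outside {1,2,4,7}; then the other must have value 1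
      rw [not_and_or] at hbad
      have key : ∀ p q : Fin (2 ^ k), p ≠ q →
          (∀ m, x m ≠ 0 ↔ (m = p ∨ m = q)) → x = e p + e q →
          ¬(p.val = 1 ∨ p.val = 2 ∨ p.val = 4) → p.val ≠ 7 → q.val ≠ 7 →
          ∃ u, ∃ hu : u < 2^k, x = decE h8 u hu := by
        intro p q hpq hxm' hxe' hpv hp7 hq7
        push_neg at hpv
        by_cases hq1 : q.val = 1
        · refine ⟨1 ^^^ p.val, Nat.xor_lt_two_pow (by omega) p.isLt, ?_⟩
          rw [hxe', add_comm]
          exact pair_form h8 q p hq1 (by omega) hp7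
        · exfalso
          have hbel1 : (1:ℕ) < 2^k := by omega
          set bel : Fin (2^k) := ⟨1, hbel1⟩ with hbeldef
          have hbelv : bel.val = 1 := rfl
          have hbelF : bel ∈ Fset x := by
            rw [mem_Fset]
            exact Or.inr ⟨hbelv, p, (hxm' p).mpr (Or.inl rfl), hpv.1, hpv.2.1, hpv.2.2, hp7⟩
          have hbelsupp : bel ∉ supp := by
            rw [hmem_supp]
            intro hbne
            rcases (hxm' bel).mp hbne with h | h
            · exact hpv.1 (h ▸ hbelv)
            · exact hq1 (h ▸ hbelv)
          have hsub : insert bel supp ⊆ Fset x := by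
            intro m hm
            rcases Finset.mem_insert.mp hm with rfl | hm
            · exact hbelF
            · exact hsuppF hm
          have h3 : (insert bel supp).card = 3 := by
            rw [Finset.card_insert_of_notMem hbelsupp, hc]
          have := le_trans (Finset.card_le_card hsub) (le_trans (card_le_wtP x) hx)
          omega
      rcases hbad with hbv | hbv
      · exact key i j hij hxm hxe hbv hi7 hj7
      · refine key j i (Ne.symm hij) (fun m => ?_) (by rw [hxe, add_comm]) hbv hj7 hi7
        rw [hxm m]
        exact or_comm

lemma ball_inj (h8 : 8 ≤ 2^k) {v w : Fin (2^k) → ZMod 2}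
    (hv : wtP Le pi' v ≤ 2) (hw : wtP Le pi' w ≤ 2)
    (h0 : sig0 v = sig0 w) (hs : ∀ j < k, sig j v = sig j w) : v = w := by
  rcases classify h8 v hv with ⟨i, rfl⟩ | ⟨u, hu, rfl⟩ <;>
    rcases classify h8 w hw with ⟨i', rfl⟩ | ⟨u', hu', rfl⟩
  · have : i.val = i'.val := by
      refine bits_inj i.isLt i'.isLt (fun j hj => ind_inj ?_)
      rw [← sig_e, ← sig_e]
      exact hs j hj
    rw [Fin.ext this]
  · exfalso
    rw [sig0_e, sig0_decE] at h0
    exact absurd h0 (by decide)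
  · exfalso
    rw [sig0_e, sig0_decE] at h0
    exact absurd h0.symm (by decide)
  · have huu : u = u' := by
      refine bits_inj hu hu' (fun j hj => ind_inj ?_)
      rw [← sig_decE h8 u hu, ← sig_decE h8 u' hu']
      exact hs j hj
    subst huu
    rfl

lemma decode (h8 : 8 ≤ 2^k) (x : Fin (2^k) → ZMod 2) :
    ∃ v : Fin (2^k) → ZMod 2, wtP Le pi' v ≤ 2 ∧ sig0 v = sig0 x ∧ ∀ j < k, sig j v = sig j x := by
  classical
  set g : Fin k → Fin 2 := fun j => if sig j.val x = 1 then 1 else 0 with hg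
  set t : Fin (2^k) := finFunctionFinEquiv g with ht
  have hzero : ∀ a : ZMod 2, a ≠ 1 → a = 0 := by decide
  have hbit : ∀ j, j < k → (if Nat.testBit t.val j then (1:ZMod 2) else 0) = sig j x := by
    intro j hj
    have hdig : ((finFunctionFinEquiv.symm t) ⟨j, hj⟩).val = t.val / 2^j % 2 := by
      simp [finFunctionFinEquiv]
    have hsymm : finFunctionFinEquiv.symm t = g := by rw [ht, Equiv.symm_apply_apply]
    rw [hsymm] at hdig
    rw [Nat.testBit_eq_decide_div_mod_eq, ← hdig]
    by_cases hx1 : sig j x = 1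
    · have hgv : (g ⟨j, hj⟩).val = 1 := by simp [hg, hx1]
      rw [hgv]
      simp [hx1]
    · have hgv : (g ⟨j, hj⟩).val = 0 := by simp [hg, hx1]
      rw [hgv]
      simp [hzero _ hx1]
  by_cases hp : sig0 x = 1
  · exact ⟨e t, wtP_e h8 t, by rw [sig0_e, hp], fun j hj => by rw [sig_e]; exact hbit j hj⟩
  · refine ⟨decE h8 t.val t.isLt, wtP_decE h8 _ _, ?_, fun j hj => ?_⟩
    · rw [sig0_decE, hzero _ hp]
    · rw [sig_decE]
      exact hbit j hj

end

end Stmt16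

theorem stmt_16 (k : ℕ) (hk : 3 ≤ k) :
    ∃ (le : Fin (2 ^ k) → Fin (2 ^ k) → Prop) (π : Fin (2 ^ k) → ℕ),
      (∀ i, le i i) ∧ (∀ i j, le i j → le j i → i = j) ∧
      (∀ i j l, le i j → le j l → le i l) ∧
      (∀ i, 0 < π i) ∧ (∃ a, π a = 2) ∧
      IsCovering (dP le π) (extHamming k) 2 ∧
      IsPacking (dP le π) (extHamming k) 2 := by
  have h8 : 8 ≤ 2^k := by
    calc (8:ℕ) = 2^3 := by norm_num
    _ ≤ 2^k := Nat.pow_le_pow_right (by norm_num) hk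
  refine ⟨Stmt16.Le, Stmt16.pi', fun i => Or.inl rfl, ?_, ?_, ?_,
    ⟨⟨7, by omega⟩, by simp [Stmt16.pi']⟩, ?_, ?_⟩
  · -- antisymmetry
    intro i j h1 h2
    rcases h1 with rfl | ⟨h1a, h1b, _⟩
    · rfl
    · rcases h2 with rfl | ⟨h2a, _⟩
      · rfl
      · exact absurd h2a h1b
  · -- transitivity
    intro i j l h1 h2
    rcases h1 with rfl | ⟨h1a, h1b⟩
    · exact h2
    · rcases h2 with rfl | ⟨h2a, _⟩
      · exact Or.inr ⟨h1a, h1b⟩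
      · exact absurd h2a h1b.1
  · -- positivity
    intro i
    unfold Stmt16.pi'
    split <;> omega
  · -- covering
    intro x
    obtain ⟨v, hv2, hv0, hvs⟩ := Stmt16.decode h8 x
    refine ⟨x - v, ⟨?_, ?_⟩, ?_⟩
    · show Stmt16.sig0 (x - v) = 0
      rw [Stmt16.sig0_sub, hv0, sub_self]
    · intro j hj
      show Stmt16.sig j (x - v) = 0
      rw [Stmt16.sig_sub, hvs j hj, sub_self]
    · show wtP Stmt16.Le Stmt16.pi' ((x - v) - x) ≤ 2
      have hkey : ∀ a b : ZMod 2, (a - b) - a = b := by decide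
      have : (x - v) - x = v := by
        funext m
        exact hkey (x m) (v m)
      rw [this]
      exact hv2
  · -- packing
    rintro c₁ h₁ c₂ h₂ hne x ⟨d₁, d₂⟩
    apply hne
    have hs0 : Stmt16.sig0 (c₁ - x) = Stmt16.sig0 (c₂ - x) := by
      rw [Stmt16.sig0_sub, Stmt16.sig0_sub,
        show Stmt16.sig0 c₁ = 0 from h₁.1, show Stmt16.sig0 c₂ = 0 from h₂.1]
    have hss : ∀ j < k, Stmt16.sig j (c₁ - x) = Stmt16.sig j (c₂ - x) := by
      intro j hj
      rw [Stmt16.sig_sub, Stmt16.sig_sub,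
        show Stmt16.sig j c₁ = 0 from h₁.2 j hj, show Stmt16.sig j c₂ = 0 from h₂.2 j hj]
    have hv : c₁ - x = c₂ - x := Stmt16.ball_inj h8 d₁ d₂ hs0 hss
    have hkey : ∀ a b c : ZMod 2, a - c = b - c → a = b := by decide
    funext m
    exact hkey _ _ _ (congrFun hv m)
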